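/- Let r ∈ ℝ, M ≥ 1 an integer, and let Î_1, …, Î_M be random closed bounded intervals of ℝ such that P(r ∈ Î_m) ≥ 1 − e^{−m} for every m ∈ {1, …, M}. Define m̂ = min{ m ∈ {1,…,M} : ⋂_{j=m}^{M} Î_j ≠ ∅ } and let r̃ be the midpoint of the interval ⋂_{j=m̂}^{M} Î_j. Then for every δ ∈ [e^{−M}/(1 − e^{−1}), 1), letting m_δ be the smallest integer m ∈ {1,…,M} with δ ≥ e^{−m}/(1 − e^{−1}), one has P(|r̃ − r| > |Î_{m_δ}|) ≤ δ, where |I| denotes the length of the interval I. -/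

import Mathlib

open MeasureTheory ProbabilityTheory

/-- Section 7 of the paper, inequality (7.1): from a family of
confidence intervals `Î_m = [A_m, B_m]`, `m = 1, …, M`, with respective levels
`1 - e^{-m}`, one builds the confidence-level-independent estimator `r̃` as the
midpoint of `⋂_{j = m̂}^M Î_j`, where `m̂` is the smallest `m` for which this
intersection is nonempty; the midpoint of a nonempty closed bounded interval
`I` is `(inf I + sup I)/2`, and `|Î_m| = B_m - A_m` is the length of `Î_m`. -/
theorem delta_independent_estimator_bound
    {Ω : Type*} [MeasureSpace Ω] [IsProbabilityMeasure (ℙ : Measure Ω)]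
    (M : ℕ) (hM : 1 ≤ M) (r : ℝ)
    (A B : ℕ → Ω → ℝ)
    (hAmeas : ∀ m, Measurable (A m)) (hBmeas : ∀ m, Measurable (B m))
    (hAB : ∀ m ∈ Finset.Icc 1 M, ∀ ω, A m ω ≤ B m ω)
    (hconf : ∀ m ∈ Finset.Icc 1 M,
      1 - Real.exp (-(m : ℝ)) ≤ (ℙ {ω | r ∈ Set.Icc (A m ω) (B m ω)}).toReal)
    (mhat : Ω → ℕ)
    (hmhat : ∀ ω, mhat ω = sInf {m | 1 ≤ m ∧ m ≤ M ∧
      (⋂ j ∈ Finset.Icc m M, Set.Icc (A j ω) (B j ω)).Nonempty})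
    (rtilde : Ω → ℝ)
    (hrtilde : ∀ ω, rtilde ω =
      (sInf (⋂ j ∈ Finset.Icc (mhat ω) M, Set.Icc (A j ω) (B j ω)) +
        sSup (⋂ j ∈ Finset.Icc (mhat ω) M, Set.Icc (A j ω) (B j ω))) / 2)
    (δ : ℝ) (hδ1 : Real.exp (-(M : ℝ)) / (1 - Real.exp (-1)) ≤ δ) (hδ2 : δ < 1)
    (mδ : ℕ)
    (hmδ : mδ = sInf {m | 1 ≤ m ∧ m ≤ M ∧
      Real.exp (-(m : ℝ)) / (1 - Real.exp (-1)) ≤ δ}) :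
    (ℙ {ω | B mδ ω - A mδ ω < |rtilde ω - r|}).toReal ≤ δ := by
  have hq : Real.exp (-1 : ℝ) < 1 := by
    rw [Real.exp_lt_one_iff]; norm_num
  have hq0 : (0:ℝ) < Real.exp (-1 : ℝ) := Real.exp_pos _
  have hqd : (0:ℝ) < 1 - Real.exp (-1 : ℝ) := by linarith
  -- properties of mδ
  have hMmem : M ∈ {m | 1 ≤ m ∧ m ≤ M ∧
      Real.exp (-(m : ℝ)) / (1 - Real.exp (-1)) ≤ δ} := ⟨hM, le_refl M, hδ1⟩
  have hmδmem : mδ ∈ {m | 1 ≤ m ∧ m ≤ M ∧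
      Real.exp (-(m : ℝ)) / (1 - Real.exp (-1)) ≤ δ} := hmδ ▸ Nat.sInf_mem ⟨M, hMmem⟩
  obtain ⟨hmδ1, hmδM, hmδδ⟩ := hmδmem
  -- the confidence events
  set E : ℕ → Set Ω := fun m => {ω | r ∈ Set.Icc (A m ω) (B m ω)} with hE
  have hEmeas : ∀ m, MeasurableSet (E m) := by
    intro m
    have : E m = {ω | A m ω ≤ r} ∩ {ω | r ≤ B m ω} := by
      ext ω; simp [hE, Set.mem_Icc, and_comm]
    rw [this]
    exact (measurableSet_le (hAmeas m) measurable_const).inter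
      (measurableSet_le measurable_const (hBmeas m))
  -- deterministic key lemma
  have key : ∀ ω, (∀ m ∈ Finset.Icc mδ M, ω ∈ E m) →
      |rtilde ω - r| ≤ B mδ ω - A mδ ω := by
    intro ω hω
    set S := {m | 1 ≤ m ∧ m ≤ M ∧
      (⋂ j ∈ Finset.Icc m M, Set.Icc (A j ω) (B j ω)).Nonempty} with hS
    have hmδS : mδ ∈ S :=
      ⟨hmδ1, hmδM, ⟨r, Set.mem_iInter₂.2 fun j hj => hω j hj⟩⟩
    have hmh : mhat ω ≤ mδ := by
      rw [hmhat ω]; exact Nat.sInf_le hmδS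
    have hmhS : mhat ω ∈ S := by
      rw [hmhat ω]; exact Nat.sInf_mem ⟨mδ, hmδS⟩
    obtain ⟨h1, h2, hne⟩ := hmhS
    set I := ⋂ j ∈ Finset.Icc (mhat ω) M, Set.Icc (A j ω) (B j ω) with hI
    have hsub : I ⊆ Set.Icc (A mδ ω) (B mδ ω) := fun x hx =>
      Set.mem_iInter₂.1 hx mδ (Finset.mem_Icc.2 ⟨hmh, hmδM⟩)
    obtain ⟨x, hx⟩ := hne
    have hbd : BddBelow I := ⟨A mδ ω, fun y hy => (hsub hy).1⟩
    have hbu : BddAbove I := ⟨B mδ ω, fun y hy => (hsub hy).2⟩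
    have hinf : A mδ ω ≤ sInf I := le_csInf ⟨x, hx⟩ fun y hy => (hsub hy).1
    have hsup : sSup I ≤ B mδ ω := csSup_le ⟨x, hx⟩ fun y hy => (hsub hy).2
    have hle : sInf I ≤ sSup I := csInf_le_csSup ⟨x, hx⟩ hbd hbu
    have hr : r ∈ Set.Icc (A mδ ω) (B mδ ω) :=
      hω mδ (Finset.mem_Icc.2 ⟨le_refl _, hmδM⟩)
    obtain ⟨hr1, hr2⟩ := hr
    rw [hrtilde ω, abs_sub_le_iff]
    constructor <;> [linarith; linarith]
  -- the bad event is contained in the union of the complements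
  have hsubset : {ω | B mδ ω - A mδ ω < |rtilde ω - r|} ⊆
      ⋃ m ∈ Finset.Icc mδ M, (E m)ᶜ := by
    intro ω hω
    by_contra hc
    simp only [Set.mem_iUnion, Set.mem_compl_iff, not_exists, not_not] at hc
    have : ∀ m ∈ Finset.Icc mδ M, ω ∈ E m := fun m hm => hc m hm
    exact absurd (key ω this) (not_le.2 hω)
  -- per-term probability bound
  have hterm : ∀ m ∈ Finset.Icc mδ M,
      (ℙ ((E m)ᶜ)).toReal ≤ Real.exp (-(m : ℝ)) := by
    intro m hm
    rw [Finset.mem_Icc] at hm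
    have hm1 : m ∈ Finset.Icc 1 M := Finset.mem_Icc.2 ⟨le_trans hmδ1 hm.1, hm.2⟩
    have := hconf m hm1
    have h1 : (ℙ ((E m)ᶜ)).toReal = 1 - (ℙ (E m)).toReal := by
      rw [measure_compl (hEmeas m) (measure_ne_top _ _), measure_univ,
        ENNReal.toReal_sub_of_le prob_le_one ENNReal.one_ne_top, ENNReal.toReal_one]
    rw [h1]; linarith
  -- union bound
  have hub : ℙ {ω | B mδ ω - A mδ ω < |rtilde ω - r|} ≤
      ∑ m ∈ Finset.Icc mδ M, ℙ ((E m)ᶜ) :=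
    le_trans (measure_mono hsubset) (measure_biUnion_finset_le _ _)
  have hfin : (∑ m ∈ Finset.Icc mδ M, ℙ ((E m)ᶜ)) ≠ ⊤ := by
    refine (ENNReal.sum_lt_top.2 fun m _ => ?_).ne
    exact lt_of_le_of_lt prob_le_one (by norm_num)
  have h2 : (ℙ {ω | B mδ ω - A mδ ω < |rtilde ω - r|}).toReal ≤
      ∑ m ∈ Finset.Icc mδ M, (ℙ ((E m)ᶜ)).toReal := by
    rw [← ENNReal.toReal_sum fun m _ => (lt_of_le_of_lt prob_le_one (by norm_num)).ne]
    exact ENNReal.toReal_mono hfin hub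
  have h3 : ∑ m ∈ Finset.Icc mδ M, (ℙ ((E m)ᶜ)).toReal ≤
      ∑ m ∈ Finset.Icc mδ M, Real.exp (-(m : ℝ)) :=
    Finset.sum_le_sum hterm
  -- geometric sum bound
  set q := Real.exp (-1 : ℝ) with hqdef
  have hexp : ∀ m : ℕ, Real.exp (-(m : ℝ)) = q ^ m := by
    intro m
    rw [hqdef, ← Real.exp_nat_mul]
    norm_num
  have h4 : ∑ m ∈ Finset.Icc mδ M, Real.exp (-(m : ℝ)) ≤
      Real.exp (-(mδ : ℝ)) / (1 - q) := by
    simp only [hexp]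
    have hset : Finset.Icc mδ M = Finset.range (M + 1) \ Finset.range mδ := by
      ext x
      simp only [Finset.mem_Icc, Finset.mem_sdiff, Finset.mem_range]
      omega
    rw [hset, Finset.sum_sdiff_eq_sub (Finset.range_subset_range.2 (by omega)),
      geom_sum_eq hq.ne, geom_sum_eq hq.ne]
    have h5 : (q ^ (M + 1) - 1) / (q - 1) - (q ^ mδ - 1) / (q - 1)
        = (q ^ mδ - q ^ (M + 1)) / (1 - q) := by
      have h6 : q - 1 ≠ 0 := by linarith
      have h7 : (1:ℝ) - q ≠ 0 := by linarith
      field_simp [h6, h7]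
      ring
    rw [h5]
    gcongr
    have := pow_nonneg hq0.le (M + 1)
    linarith
  linarith [hmδδ]
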